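/- A k-algebra A is a *-algebra (every element of M_A is invertible in A) if and only if the canonical localization map A → A_M is an isomorphism. In particular, A_M is a *-algebra for every k-algebra A. -/

import Mathlib

open MvPolynomial

/-- The set `M_B` of all evaluations in `B` of polynomials over `k` with no rational zero
in `k`. -/
def MAset (k : Type) [Field k] (B : Type) [CommRing B] [Algebra k B] : Set B :=
  {x | ∃ (m : ℕ) (D : MvPolynomial (Fin m) k) (b : Fin m → B),
    (∀ v : Fin m → k, eval v D ≠ 0) ∧ x = aeval b D}

section AuxHom

variable {k : Type} [Field k]

/-- A "homogenization" of `D` of degree `totalDegree D`, using the polynomial `P` (in a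
disjoint set of variables) as the homogenizing factor. -/
noncomputable def homE {m n : ℕ} (D : MvPolynomial (Fin m) k) (P : MvPolynomial (Fin n) k) :
    MvPolynomial (Fin m ⊕ Fin n) k :=
  ∑ α ∈ D.support, C (D.coeff α) * (∏ i, X (Sum.inl i) ^ α i) *
    (rename Sum.inr P) ^ (D.totalDegree - ∑ i, α i)

lemma homE_expand {m n : ℕ} (D : MvPolynomial (Fin m) k) (P : MvPolynomial (Fin n) k)
    {R : Type} [CommRing R] [Algebra k R] (f : Fin m ⊕ Fin n → R) :
    aeval f (homE D P) = ∑ α ∈ D.support, algebraMap k R (D.coeff α) *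
      (∏ i, f (Sum.inl i) ^ α i) * (aeval (f ∘ Sum.inr) P) ^ (D.totalDegree - ∑ i, α i) := by
  rw [homE, map_sum]
  refine Finset.sum_congr rfl fun α _ => ?_
  rw [map_mul, map_mul, map_pow, aeval_rename, aeval_C, map_prod]
  simp

lemma sum_le_totalDegree {m : ℕ} {D : MvPolynomial (Fin m) k} {α : Fin m →₀ ℕ}
    (h : α ∈ D.support) : ∑ i, α i ≤ D.totalDegree := by
  have := le_totalDegree h
  rwa [Finsupp.sum_fintype _ _ (fun _ => rfl)] at this

lemma homE_ne_zero {m n : ℕ} {D : MvPolynomial (Fin m) k} {P : MvPolynomial (Fin n) k}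
    (hD : ∀ v : Fin m → k, eval v D ≠ 0) (hP : ∀ w : Fin n → k, eval w P ≠ 0)
    (v : Fin m ⊕ Fin n → k) : eval v (homE D P) ≠ 0 := by
  have h := homE_expand D P v
  rw [show (aeval (v ∘ Sum.inr) P) = eval (v ∘ Sum.inr) P from rfl] at h
  set q := eval (v ∘ Sum.inr) P with hq
  have hq0 : q ≠ 0 := hP _
  have key : aeval v (homE D P) = q ^ D.totalDegree * eval (fun i => v (Sum.inl i) * q⁻¹) D := by
    rw [h, eval_eq', Finset.mul_sum]
    refine Finset.sum_congr rfl fun α hα => ?_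
    have hle := sum_le_totalDegree hα
    have : ∏ i, (v (Sum.inl i) * q⁻¹) ^ α i =
        (∏ i, v (Sum.inl i) ^ α i) * (q⁻¹) ^ (∑ i, α i) := by
      rw [← Finset.prod_pow_eq_pow_sum, ← Finset.prod_mul_distrib]
      simp [mul_pow]
    rw [this]
    have : q ^ (D.totalDegree - ∑ i, α i) = q ^ D.totalDegree * (q⁻¹) ^ (∑ i, α i) := by
      rw [inv_pow, eq_comm, mul_inv_eq_iff_eq_mul₀ (pow_ne_zero _ hq0), pow_sub_mul_pow _ hle]
    rw [this, show algebraMap k k (D.coeff α) = D.coeff α from rfl]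
    ring
  rw [show eval v (homE D P) = aeval v (homE D P) from rfl, key]
  exact mul_ne_zero (pow_ne_zero _ hq0) (hD _)

lemma homE_mul {m n : ℕ} (D : MvPolynomial (Fin m) k) (P : MvPolynomial (Fin n) k)
    {R : Type} [CommRing R] [Algebra k R] (b : Fin m → R) (T : R) (g : Fin n → R)
    (hT : aeval g P = T) :
    aeval (Sum.elim (fun i => b i * T) g) (homE D P) = aeval b D * T ^ D.totalDegree := by
  rw [homE_expand, show (Sum.elim (fun i => b i * T) g) ∘ Sum.inr = g from rfl, hT,
    aeval_def, eval₂_eq', Finset.sum_mul]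
  refine Finset.sum_congr rfl fun α hα => ?_
  have hle := sum_le_totalDegree hα
  have h1 : ∏ i, (Sum.elim (fun i => b i * T) g) (Sum.inl i) ^ α i =
      (∏ i, b i ^ α i) * T ^ (∑ i, α i) := by
    rw [← Finset.prod_pow_eq_pow_sum, ← Finset.prod_mul_distrib]
    simp [mul_pow]
  rw [h1, mul_assoc, mul_assoc, mul_assoc]
  congr 1
  rw [mul_comm (T ^ (∑ i, α i)), pow_sub_mul_pow _ hle]

end AuxHom

section Aux
variable {k : Type} [Field k] {B : Type} [CommRing B] [Algebra k B]

lemma MAset.one_mem' : (1 : B) ∈ MAset k B := by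
  refine ⟨0, 1, Fin.elim0, fun v => ?_, by simp⟩
  simp

lemma MAset.mul_mem' {x y : B} (hx : x ∈ MAset k B) (hy : y ∈ MAset k B) :
    x * y ∈ MAset k B := by
  obtain ⟨m₁, D₁, b₁, h₁, rfl⟩ := hx
  obtain ⟨m₂, D₂, b₂, h₂, rfl⟩ := hy
  refine ⟨m₁ + m₂, rename finSumFinEquiv (rename Sum.inl D₁ * rename Sum.inr D₂),
    Sum.elim b₁ b₂ ∘ finSumFinEquiv.symm, fun v => ?_, ?_⟩
  · rw [eval_rename, map_mul, eval_rename, eval_rename]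
    exact mul_ne_zero (h₁ _) (h₂ _)
  · rw [aeval_rename, map_mul, aeval_rename, aeval_rename]
    have : (Sum.elim b₁ b₂ ∘ ⇑finSumFinEquiv.symm) ∘ ⇑finSumFinEquiv = Sum.elim b₁ b₂ := by
      funext i; simp
    rw [this]
    rfl

lemma mem_MAset_of_mem_closure {x : B} (hx : x ∈ Submonoid.closure (MAset k B)) :
    x ∈ MAset k B :=
  Submonoid.closure_le (S := ⟨⟨MAset k B, fun ha hb => MAset.mul_mem' ha hb⟩,
    MAset.one_mem'⟩).mpr (fun _ hy => hy) hx
end Aux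

/-- A `k`-algebra `A` is a `*`-algebra (every element of `M_A` is invertible in `A`) if and
only if the canonical localization map `A → A_M` is an isomorphism.  In particular, `A_M` is
a `*`-algebra for every `k`-algebra `A`. -/
theorem starAlgebra_iff_canonicalLocalization_bijective (k A : Type) [Field k] [CommRing A]
    [Algebra k A] :
    ((∀ x ∈ MAset k A, IsUnit x) ↔
      Function.Bijective
        (algebraMap A (Localization (Submonoid.closure (MAset k A))))) ∧
    (∀ y ∈ MAset k (Localization (Submonoid.closure (MAset k A))), IsUnit y) := by
  set M : Submonoid A := Submonoid.closure (MAset k A) with hM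
  set L := Localization M with hL
  constructor
  · constructor
    · intro h
      have H : M ≤ IsUnit.submonoid A := Submonoid.closure_le.mpr (fun x hx => h x hx)
      have := (IsLocalization.atUnits A M (S := L) H).bijective
      simpa [IsLocalization.atUnits, Algebra.ofId, AlgEquiv.coe_ofBijective] using this
    · intro hbij x hx
      have hu : IsUnit (algebraMap A L x) :=
        IsLocalization.map_units L (⟨x, Submonoid.subset_closure hx⟩ : M)
      let e := RingEquiv.ofBijective (algebraMap A L) hbij
      have h2 : IsUnit (e.symm (e x)) := hu.map e.symm
      rwa [RingEquiv.symm_apply_apply] at h2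
  · rintro y ⟨m, D, b, hD, rfl⟩
    obtain ⟨t, ht⟩ := IsLocalization.exist_integer_multiples_of_finite M b
    choose a ha using ht
    obtain ⟨n, P, e, hP, htP⟩ := mem_MAset_of_mem_closure t.2
    set T : L := algebraMap A L (t : A) with hT
    have hTunit : IsUnit T := IsLocalization.map_units L t
    have hbT : ∀ i, b i * T = algebraMap A L (a i) := fun i => by
      rw [ha i, Algebra.smul_def]; ring
    set z : A := aeval (Sum.elim a e) (homE D P) with hz
    have hzM : z ∈ MAset k A := by
      refine ⟨m + n, rename finSumFinEquiv (homE D P),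
        Sum.elim a e ∘ finSumFinEquiv.symm, fun v => ?_, ?_⟩
      · rw [eval_rename]
        exact homE_ne_zero hD hP _
      · rw [aeval_rename]
        have : (Sum.elim a e ∘ ⇑finSumFinEquiv.symm) ∘ ⇑finSumFinEquiv = Sum.elim a e := by
          funext i; simp
        rw [this]
    have himg : algebraMap A L z = aeval b D * T ^ D.totalDegree := by
      have h1 : algebraMap A L z = aeval (fun i => algebraMap A L (Sum.elim a e i)) (homE D P) :=
        comp_aeval_apply (Sum.elim a e) (IsScalarTower.toAlgHom k A L) (homE D P)
      have h2 : (fun i => algebraMap A L (Sum.elim a e i)) =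
          Sum.elim (fun i => b i * T) (fun j => algebraMap A L (e j)) := by
        funext i
        cases i with
        | inl i => simp [hbT]
        | inr j => rfl
      have h3 : aeval (fun j => algebraMap A L (e j)) P = T := by
        rw [hT, htP]
        exact (comp_aeval_apply e (IsScalarTower.toAlgHom k A L) P).symm
      rw [h1, h2, homE_mul D P b T _ h3]
    have hzu : IsUnit (algebraMap A L z) :=
      IsLocalization.map_units L (⟨z, Submonoid.subset_closure hzM⟩ : M)
    rw [himg] at hzu
    exact isUnit_of_mul_isUnit_left hzu
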